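/- Let S ⊂ ℝᵏ be a bounded convex set with S ⊂ B(0,R), and suppose the k-dimensional Lebesgue measure of the polar S° is less than c. Then S contains the ball B(0,r) with r = |B^{k−1}(0,1)| / (2c(2R)^{k−1}), where |B^{k−1}(0,1)| is the volume of the unit ball in ℝ^{k−1}. -/

import Mathlib

open scoped RealInnerProductSpace
open MeasureTheory

/-- The polar of a set `S ⊆ ℝᵏ`. -/
def realPolar {n : ℕ} (S : Set (EuclideanSpace ℝ (Fin n))) :
    Set (EuclideanSpace ℝ (Fin n)) :=
  {y | ∀ x ∈ S, ⟪x, y⟫ ≤ 1}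

/-- Scaling of ball volumes in `EuclideanSpace ℝ (Fin m)`. -/
lemma volball_scale {m : ℕ} {b : ℝ} (hb : 0 < b) :
    volume (Metric.ball (0 : EuclideanSpace ℝ (Fin m)) b)
      = ENNReal.ofReal (b ^ m) * volume (Metric.ball (0 : EuclideanSpace ℝ (Fin m)) 1) := by
  cases m with
  | zero =>
      have h1 : (Metric.ball (0 : EuclideanSpace ℝ (Fin 0)) b) = Set.univ := by
        ext w
        simp [Metric.mem_ball, Subsingleton.elim w 0, hb]
      have h2 : (Metric.ball (0 : EuclideanSpace ℝ (Fin 0)) 1) = Set.univ := by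
        ext w
        simp [Metric.mem_ball, Subsingleton.elim w 0]
      simp [h1, h2]
  | succ n =>
      rw [Measure.addHaar_ball _ _ hb.le, finrank_euclideanSpace_fin]

/-- Measurability of the coordinate cylinder in `Fin (m+1) → ℝ`. -/
lemma cylinder_meas {m : ℕ} (a b : ℝ) :
    MeasurableSet {g : Fin (m + 1) → ℝ |
      (0 < g (Fin.last m) ∧ g (Fin.last m) < a) ∧
        ∑ i : Fin m, g ((Fin.last m).succAbove i) ^ 2 < b ^ 2} := by
  have h1 : Measurable fun g : Fin (m + 1) → ℝ => g (Fin.last m) := measurable_pi_apply _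
  have h2 : Measurable fun g : Fin (m + 1) → ℝ =>
      ∑ i : Fin m, g ((Fin.last m).succAbove i) ^ 2 :=
    Finset.measurable_sum _ fun i _ => ((measurable_pi_apply ((Fin.last m).succAbove i)).pow_const 2)
  exact ((measurableSet_lt measurable_const h1).inter
    (measurableSet_lt h1 measurable_const)).inter (measurableSet_lt h2 measurable_const)

/-- Volume of the coordinate cylinder. -/
lemma cylinder_vol {m : ℕ} {a b : ℝ} (ha : 0 < a) (hb : 0 < b) :
    volume {g : Fin (m + 1) → ℝ |
      (0 < g (Fin.last m) ∧ g (Fin.last m) < a) ∧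
        ∑ i : Fin m, g ((Fin.last m).succAbove i) ^ 2 < b ^ 2}
      = ENNReal.ofReal a *
        (ENNReal.ofReal (b ^ m) * volume (Metric.ball (0 : EuclideanSpace ℝ (Fin m)) 1)) := by
  set D : Set (Fin m → ℝ) := {w | ∑ i, w i ^ 2 < b ^ 2} with hD
  have hDmeas : MeasurableSet D :=
    measurableSet_lt (Finset.measurable_sum _ fun i _ => ((measurable_pi_apply i).pow_const 2))
      measurable_const
  have hDvol : volume D
      = ENNReal.ofReal (b ^ m) * volume (Metric.ball (0 : EuclideanSpace ℝ (Fin m)) 1) := by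
    have hpre : Metric.ball (0 : EuclideanSpace ℝ (Fin m)) b
        = ((MeasurableEquiv.toLp 2 (Fin m → ℝ)).symm) ⁻¹' D := by
      ext w
      have : (((MeasurableEquiv.toLp 2 (Fin m → ℝ)).symm) w : Fin m → ℝ) = fun i => w i := rfl
      simp only [Set.mem_preimage, this, hD, Set.mem_setOf_eq, mem_ball_zero_iff,
        EuclideanSpace.norm_eq, Real.norm_eq_abs, sq_abs]
      rw [Real.sqrt_lt' hb]
    have := (EuclideanSpace.volume_preserving_symm_measurableEquiv_toLp (Fin m)).measure_preimage
      hDmeas.nullMeasurableSet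
    rw [← this, ← hpre, volball_scale hb]
  have hkey : {g : Fin (m + 1) → ℝ |
      (0 < g (Fin.last m) ∧ g (Fin.last m) < a) ∧
        ∑ i : Fin m, g ((Fin.last m).succAbove i) ^ 2 < b ^ 2}
      = (MeasurableEquiv.piFinSuccAbove (fun _ => ℝ) (Fin.last m)) ⁻¹' (Set.Ioo 0 a ×ˢ D) := by
    ext g
    simp [MeasurableEquiv.piFinSuccAbove, Fin.removeNth, Fin.init, Set.mem_Ioo, hD, Fin.succAbove_last]
  rw [hkey,
    (volume_preserving_piFinSuccAbove (fun _ : Fin (m + 1) => ℝ) (Fin.last m)).measure_preimage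
      ((measurableSet_Ioo.prod hDmeas).nullMeasurableSet),
    Measure.volume_eq_prod, Measure.prod_prod, Real.volume_Ioo, hDvol]
  simp

/-- The polar of the empty set has infinite volume. -/
lemma realPolar_empty_vol {m : ℕ} :
    volume (realPolar (∅ : Set (EuclideanSpace ℝ (Fin (m + 1))))) = ⊤ := by
  have h : realPolar (∅ : Set (EuclideanSpace ℝ (Fin (m + 1)))) = Set.univ := by
    ext y; simp [realPolar]
  rw [h]
  exact measure_univ_of_isAddLeftInvariant volume

/-- Key estimate: if `S ⊆ B(0,R)` and `⟪x,u⟫ ≤ s` on `S` for a unit vector `u` with `s > 0`,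
then `s` exceeds the radius `r`. -/
lemma keyLemma {m : ℕ} (S : Set (EuclideanSpace ℝ (Fin (m + 1))))
    (R c : ℝ) (hR : 0 < R) (hc : 0 < c)
    (hSR : S ⊆ Metric.ball 0 R)
    (hvol : volume (realPolar S) < ENNReal.ofReal c)
    (u : EuclideanSpace ℝ (Fin (m + 1))) (hu : ‖u‖ = 1)
    (s : ℝ) (hs : 0 < s) (hle : ∀ x ∈ S, ⟪x, u⟫ ≤ s) :
    (volume (Metric.ball (0 : EuclideanSpace ℝ (Fin m)) 1)).toReal / (2 * c * (2 * R) ^ m) < s := by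
  classical
  -- extend u to an orthonormal basis
  have horth : Orthonormal ℝ (({Fin.last m} : Set (Fin (m + 1))).restrict
      (fun _ : Fin (m + 1) => u)) := by
    constructor
    · intro i; exact hu
    · intro i j hij; exact absurd (Subsingleton.elim i j) hij
  obtain ⟨B, hB⟩ := horth.exists_orthonormalBasis_extension_of_card_eq (by simp)
  have hBu : B (Fin.last m) = u := hB _ rfl
  set a : ℝ := 1 / (2 * s) with hadef
  set b : ℝ := 1 / (2 * R) with hbdef
  have ha : 0 < a := by positivity
  have hb : 0 < b := by positivity
  set l := Fin.last m with hl
  set Cy : Set (EuclideanSpace ℝ (Fin (m + 1))) :=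
    {y | (0 < B.repr y l ∧ B.repr y l < a) ∧
      ∑ i : Fin m, (B.repr y (l.succAbove i)) ^ 2 < b ^ 2} with hCy
  -- the cylinder lies in the polar
  have hsub : Cy ⊆ realPolar S := by
    rintro y ⟨⟨hy0, hya⟩, hyb⟩ x hx
    have hxy : ⟪x, y⟫ = B.repr x l * B.repr y l +
        ∑ i : Fin m, B.repr x (l.succAbove i) * B.repr y (l.succAbove i) := by
      rw [← B.repr.inner_map_map x y, PiLp.inner_apply]
      simp only [RCLike.inner_apply, conj_trivial]
      rw [Fin.sum_univ_succAbove _ l]; simp only [mul_comm]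
    have hx1 : B.repr x l = ⟪u, x⟫ := by rw [B.repr_apply_apply, hBu]
    have hxu : ⟪u, x⟫ ≤ s := by rw [real_inner_comm]; exact hle x hx
    have hterm1 : B.repr x l * B.repr y l ≤ 1 / 2 := by
      have h5 : B.repr x l * B.repr y l ≤ s * B.repr y l :=
        mul_le_mul_of_nonneg_right (by rw [hx1]; exact hxu) hy0.le
      have h6 : s * B.repr y l ≤ s * a := mul_le_mul_of_nonneg_left hya.le hs.le
      have h7 : s * a = 1 / 2 := by rw [hadef]; field_simp
      linarith
    have hnormx : ‖x‖ ≤ R := (mem_ball_zero_iff.mp (hSR hx)).le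
    have hXsum : ∑ i : Fin m, (B.repr x (l.succAbove i)) ^ 2 ≤ R ^ 2 := by
      have h7 : ∑ j, (B.repr x j) ^ 2 = ‖x‖ ^ 2 := by
        rw [← B.repr.norm_map x, EuclideanSpace.norm_eq, Real.sq_sqrt (by positivity)]
        simp [Real.norm_eq_abs, sq_abs]
      have h8 := Fin.sum_univ_succAbove (fun j => (B.repr x j) ^ 2) l
      nlinarith [sq_nonneg (B.repr x l), norm_nonneg x]
    have hterm2 : ∑ i : Fin m, B.repr x (l.succAbove i) * B.repr y (l.succAbove i) ≤ 1 / 2 := by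
      have hcs := Finset.sum_mul_sq_le_sq_mul_sq Finset.univ
        (fun i : Fin m => B.repr x (l.succAbove i)) (fun i : Fin m => B.repr y (l.succAbove i))
      have hYnn : (0:ℝ) ≤ ∑ i : Fin m, (B.repr y (l.succAbove i)) ^ 2 :=
        Finset.sum_nonneg fun _ _ => sq_nonneg _
      have h9 : (∑ i : Fin m, B.repr x (l.succAbove i) * B.repr y (l.succAbove i)) ^ 2
          ≤ (R * b) ^ 2 := by
        calc (∑ i : Fin m, B.repr x (l.succAbove i) * B.repr y (l.succAbove i)) ^ 2
            ≤ (∑ i : Fin m, (B.repr x (l.succAbove i)) ^ 2) *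
              ∑ i : Fin m, (B.repr y (l.succAbove i)) ^ 2 := hcs
          _ ≤ R ^ 2 * b ^ 2 := by
              apply mul_le_mul hXsum hyb.le hYnn (by positivity)
          _ = (R * b) ^ 2 := by ring
      have hRb : R * b = 1 / 2 := by rw [hbdef]; field_simp
      nlinarith [h9, hRb, sq_nonneg
        ((∑ i : Fin m, B.repr x (l.succAbove i) * B.repr y (l.succAbove i)) + 1 / 2)]
    calc ⟪x, y⟫ = _ := hxy
      _ ≤ 1 / 2 + 1 / 2 := add_le_add hterm1 hterm2
      _ = 1 := by norm_num
  -- volume of the cylinder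
  have hCeq : Cy = ⇑B.repr ⁻¹' (((MeasurableEquiv.toLp 2 (Fin (m + 1) → ℝ)).symm) ⁻¹'
      {g : Fin (m + 1) → ℝ | (0 < g l ∧ g l < a) ∧
        ∑ i : Fin m, g (l.succAbove i) ^ 2 < b ^ 2}) := rfl
  have hCvol : volume Cy = ENNReal.ofReal a *
      (ENNReal.ofReal (b ^ m) * volume (Metric.ball (0 : EuclideanSpace ℝ (Fin m)) 1)) := by
    rw [hCeq, B.measurePreserving_repr.measure_preimage
      ((((MeasurableEquiv.toLp 2 (Fin (m + 1) → ℝ)).symm).measurable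
        (cylinder_meas a b)).nullMeasurableSet),
      (EuclideanSpace.volume_preserving_symm_measurableEquiv_toLp (Fin (m + 1))).measure_preimage
        (cylinder_meas a b).nullMeasurableSet]
    exact cylinder_vol ha hb
  -- conclude
  set V := volume (Metric.ball (0 : EuclideanSpace ℝ (Fin m)) 1) with hVdef
  have hVne : V ≠ ⊤ := measure_ball_lt_top.ne
  have hlt : ENNReal.ofReal a * (ENNReal.ofReal (b ^ m) * V) < ENNReal.ofReal c := by
    rw [← hCvol]; exact lt_of_le_of_lt (measure_mono hsub) hvol
  have hne : ENNReal.ofReal a * (ENNReal.ofReal (b ^ m) * V) ≠ ⊤ :=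
    ENNReal.mul_ne_top ENNReal.ofReal_ne_top (ENNReal.mul_ne_top ENNReal.ofReal_ne_top hVne)
  have h2 : a * (b ^ m * V.toReal) < c := by
    have := (ENNReal.toReal_lt_toReal hne ENNReal.ofReal_ne_top).mpr hlt
    rwa [ENNReal.toReal_mul, ENNReal.toReal_mul, ENNReal.toReal_ofReal ha.le,
      ENNReal.toReal_ofReal (by positivity), ENNReal.toReal_ofReal hc.le] at this
  have hP : (0:ℝ) < (2 * R) ^ m := by positivity
  have hVr : (0:ℝ) ≤ V.toReal := ENNReal.toReal_nonneg
  rw [div_lt_iff₀ (by positivity)]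
  have h3 : a * (b ^ m * V.toReal) * (2 * s * (2 * R) ^ m) < c * (2 * s * (2 * R) ^ m) :=
    mul_lt_mul_of_pos_right h2 (by positivity)
  have h4 : a * (b ^ m * V.toReal) * (2 * s * (2 * R) ^ m) = V.toReal := by
    rw [hadef, hbdef]
    field_simp
    rw [div_pow, one_pow, div_mul_eq_mul_div, div_mul_cancel₀ _ (by positivity), one_mul]
  have h5 : c * (2 * s * (2 * R) ^ m) = s * (2 * c * (2 * R) ^ m) := by ring
  rw [h4, h5] at h3
  exact h3

/-- If `S ⊆ B(0,R)` is a bounded convex subset of `ℝᵏ`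
(here `k = m+1`) and `|S°| < c`, then `B(0,r) ⊆ S` with
`r = |B^{k-1}(0,1)| / (2c(2R)^{k-1})`. -/
theorem stmt15 {m : ℕ} (S : Set (EuclideanSpace ℝ (Fin (m + 1))))
    (hconv : Convex ℝ S) (hbdd : Bornology.IsBounded S)
    (R c : ℝ) (hR : 0 < R) (hc : 0 < c)
    (hSR : S ⊆ Metric.ball 0 R)
    (hvol : volume (realPolar S) < ENNReal.ofReal c) :
    Metric.ball (0 : EuclideanSpace ℝ (Fin (m + 1)))
        ((volume (Metric.ball (0 : EuclideanSpace ℝ (Fin m)) 1)).toReal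
          / (2 * c * (2 * R) ^ m))
      ⊆ S := by
  classical
  set V := volume (Metric.ball (0 : EuclideanSpace ℝ (Fin m)) 1) with hVdef
  set r := V.toReal / (2 * c * (2 * R) ^ m) with hrdef
  have hVpos : 0 < V := Metric.measure_ball_pos volume 0 one_pos
  have hVne : V ≠ ⊤ := measure_ball_lt_top.ne
  have hr : 0 < r := div_pos (ENNReal.toReal_pos hVpos.ne' hVne) (by positivity)
  have hSne : S.Nonempty := by
    rw [Set.nonempty_iff_ne_empty]
    intro h
    rw [h, realPolar_empty_vol] at hvol
    exact not_top_lt hvol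
  -- Step 1: the ball is contained in the closure of S
  have hstep1 : Metric.ball (0 : EuclideanSpace ℝ (Fin (m + 1))) r ⊆ closure S := by
    intro z hz
    by_contra hzT
    obtain ⟨f, t, hft, hfS⟩ :=
      geometric_hahn_banach_point_closed hconv.closure isClosed_closure hzT
    set v := (InnerProductSpace.toDual ℝ (EuclideanSpace ℝ (Fin (m + 1)))).symm f with hv
    have hfv : ∀ w, ⟪v, w⟫ = f w := fun w => InnerProductSpace.toDual_symm_apply
    have hvne : v ≠ 0 := by
      obtain ⟨x₀, hx₀⟩ := hSne
      intro h0
      have h1 : f x₀ = 0 := by rw [← hfv x₀, h0, inner_zero_left]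
      have h2 : f z = 0 := by rw [← hfv z, h0, inner_zero_left]
      have h3 := hfS x₀ (subset_closure hx₀)
      rw [h1] at h3; rw [h2] at hft; linarith
    have hvn : 0 < ‖v‖ := norm_pos_iff.mpr hvne
    set u : EuclideanSpace ℝ (Fin (m + 1)) := -(‖v‖⁻¹ • v) with hu
    have hun : ‖u‖ = 1 := by
      rw [hu, norm_neg, norm_smul, norm_inv, norm_norm, inv_mul_cancel₀ hvn.ne']
    have hinner : ∀ w, ⟪w, u⟫ = -(‖v‖⁻¹ * f w) := by
      intro w
      rw [hu, inner_neg_right, real_inner_smul_right, real_inner_comm, hfv]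
    set s₀ : ℝ := -(‖v‖⁻¹ * t) with hs₀
    have hles : ∀ x ∈ S, ⟪x, u⟫ ≤ s₀ := by
      intro x hx
      have h3 : t < f x := hfS x (subset_closure hx)
      rw [hinner x, hs₀]
      have hvpos : 0 < ‖v‖⁻¹ := inv_pos.mpr hvn
      nlinarith
    have hzu : s₀ < ⟪z, u⟫ := by
      rw [hinner z, hs₀]
      have hvpos : 0 < ‖v‖⁻¹ := inv_pos.mpr hvn
      nlinarith
    have hzu2 : ⟪z, u⟫ ≤ ‖z‖ := by
      have := real_inner_le_norm z u
      rwa [hun, mul_one] at this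
    have hzr : ‖z‖ < r := mem_ball_zero_iff.mp hz
    have hkey := keyLemma S R c hR hc hSR hvol u hun (max s₀ (r / 2))
      (lt_of_lt_of_le (half_pos hr) (le_max_right _ _))
      (fun x hx => (hles x hx).trans (le_max_left _ _))
    rw [← hVdef, ← hrdef] at hkey
    have : max s₀ (r / 2) < r := max_lt (by linarith) (by linarith)
    linarith
  -- Step 2: interior of S is nonempty
  have h0mem : (0 : EuclideanSpace ℝ (Fin (m + 1))) ∈ interior (closure S) :=
    interior_maximal hstep1 Metric.isOpen_ball (Metric.mem_ball_self hr)
  have hspan : affineSpan ℝ (closure S) = ⊤ :=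
    (hconv.closure.interior_nonempty_iff_affineSpan_eq_top).mp ⟨0, h0mem⟩
  have hspan2 : affineSpan ℝ S = ⊤ := by
    have hclosed : IsClosed ((affineSpan ℝ S : AffineSubspace ℝ
        (EuclideanSpace ℝ (Fin (m + 1)))) : Set (EuclideanSpace ℝ (Fin (m + 1)))) :=
      (affineSpan ℝ S).closed_of_finiteDimensional
    have hsub : closure S ⊆ (affineSpan ℝ S : Set (EuclideanSpace ℝ (Fin (m + 1)))) :=
      hclosed.closure_subset_iff.mpr (subset_affineSpan ℝ S)
    have hle2 : affineSpan ℝ (closure S) ≤ affineSpan ℝ S := affineSpan_le.mpr hsub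
    rw [hspan] at hle2
    exact top_le_iff.mp hle2
  obtain ⟨w, hw⟩ : (interior S).Nonempty :=
    (hconv.interior_nonempty_iff_affineSpan_eq_top).mpr hspan2
  -- Step 3: conclude
  intro z hz
  have hzc : z ∈ interior (closure S) := interior_maximal hstep1 Metric.isOpen_ball hz
  by_cases hzw : z = w
  · exact interior_subset (hzw ▸ hw)
  · obtain ⟨ε, hε, hball⟩ := Metric.mem_nhds_iff.mp (mem_interior_iff_mem_nhds.mp hzc)
    have hzwn : 0 < ‖z - w‖ := by rwa [norm_pos_iff, sub_ne_zero]
    set δ := ε / (2 * ‖z - w‖) with hδ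
    have hδpos : 0 < δ := by positivity
    set p := z + δ • (z - w) with hp
    have hpball : p ∈ Metric.ball z ε := by
      rw [Metric.mem_ball, dist_eq_norm]
      have h1 : p - z = δ • (z - w) := by rw [hp]; abel
      rw [h1, norm_smul, Real.norm_eq_abs, abs_of_pos hδpos, hδ]
      have h2 : ε / (2 * ‖z - w‖) * ‖z - w‖ = ε / 2 := by field_simp
      rw [h2]; linarith
    have hpc : p ∈ closure S := hball hpball
    have h1δ : (0:ℝ) < 1 + δ := by linarith
    have hseg : z ∈ openSegment ℝ w p := by
      refine ⟨δ / (1 + δ), 1 / (1 + δ), by positivity, by positivity, by field_simp; ring, ?_⟩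
      rw [hp, smul_add, smul_smul]
      rw [smul_sub]
      have hc1 : (1 / (1 + δ)) • z + (1 / (1 + δ) * δ) • z = z := by
        rw [← add_smul]
        have : 1 / (1 + δ) + 1 / (1 + δ) * δ = 1 := by field_simp
        rw [this, one_smul]
      have hc2 : (δ / (1 + δ)) • w - (1 / (1 + δ) * δ) • w = 0 := by
        rw [← sub_smul]
        have : δ / (1 + δ) - 1 / (1 + δ) * δ = 0 := by field_simp; ring
        rw [this, zero_smul]
      calc (δ / (1 + δ)) • w + ((1 / (1 + δ)) • z +
            ((1 / (1 + δ) * δ) • z - (1 / (1 + δ) * δ) • w))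
          = ((1 / (1 + δ)) • z + (1 / (1 + δ) * δ) • z) +
            ((δ / (1 + δ)) • w - (1 / (1 + δ) * δ) • w) := by abel
        _ = z := by rw [hc1, hc2, add_zero]
    exact interior_subset (hconv.openSegment_interior_closure_subset_interior hw hpc hseg)
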